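/- arXiv:1407.8543 — 2 statements merged into one kernel-verified Lean document; each statement's English description precedes it below -/
import Mathlib

section
/- Let c_{ij} (1 ≤ i < j ≤ n) and ℓ_1,…,ℓ_n be fixed integers with ℓ_i ≥ 0 for all i, and let (C(c,ℓ), ρ) be the corresponding Grossberg–Karshon twisted cube. If there exist two distinct indices i and j with 1 ≤ i < j ≤ n such that c_{ij} > 1 and ℓ_i = ℓ_j > 0, then (C(c,ℓ), ρ) is twisted. -/
open Finset

/-- `A_j(x) = ℓ_j − Σ_{k>j} c_{jk} x_k` (for the last index the sum is empty). -/
noncomputable def GKA {n : ℕ} (c : Fin n → Fin n → ℤ) (ℓ : Fin n → ℤ)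
    (j : Fin n) (x : Fin n → ℝ) : ℝ :=
  (ℓ j : ℝ) - ∑ k ∈ Finset.univ.filter (fun k : Fin n => j < k), (c j k : ℝ) * x k

/-- The Grossberg–Karshon twisted cube `C(c,ℓ)`. -/
noncomputable def GKcube {n : ℕ} (c : Fin n → Fin n → ℤ) (ℓ : Fin n → ℤ) :
    Set (Fin n → ℝ) :=
  {x | ∀ j : Fin n, (GKA c ℓ j x < x j ∧ x j < 0) ∨ (0 ≤ x j ∧ x j ≤ GKA c ℓ j x)}

/-- `sgn(t) = 1` for `t < 0` and `−1` for `t ≥ 0`. -/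
noncomputable def GKsgn (t : ℝ) : ℝ := if t < 0 then 1 else -1

open Classical in
/-- The density function `ρ`: `ρ(x) = (−1)^n ∏_k sgn(x_k)` on `C(c,ℓ)`, `0` elsewhere. -/
noncomputable def GKrho {n : ℕ} (c : Fin n → Fin n → ℤ) (ℓ : Fin n → ℤ)
    (x : Fin n → ℝ) : ℝ :=
  if x ∈ GKcube c ℓ then (-1 : ℝ) ^ n * ∏ k : Fin n, GKsgn (x k) else 0

/-- `(C(c,ℓ), ρ)` is untwisted: `C(c,ℓ)` is closed, convex, the convex hull of a
finite set, and `ρ ≡ 1` on `C(c,ℓ)`.  "Twisted" is the negation of this. -/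
noncomputable def GKUntwisted {n : ℕ} (c : Fin n → Fin n → ℤ) (ℓ : Fin n → ℤ) : Prop :=
  IsClosed (GKcube c ℓ) ∧ Convex ℝ (GKcube c ℓ) ∧
  (∃ S : Finset (Fin n → ℝ), GKcube c ℓ = convexHull ℝ (S : Set (Fin n → ℝ))) ∧
  (∀ x ∈ GKcube c ℓ, GKrho c ℓ x = 1)

/-- The Cartier data `m_σ`, defined by downward recursion:
`m_{σ,k} = 0` if `σ_k = +` (encoded `false`), and
`m_{σ,k} = ℓ_k − Σ_{s>k} c_{ks} m_{σ,s}` if `σ_k = −` (encoded `true`). -/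
def GKm {n : ℕ} (c : Fin n → Fin n → ℤ) (ℓ : Fin n → ℤ) (σ : Fin n → Bool)
    (k : Fin n) : ℤ :=
  if σ k then
    ℓ k - ∑ s ∈ (Finset.univ.filter fun s : Fin n => k < s).attach,
      c k s.1 * GKm c ℓ σ s.1
  else 0
termination_by n - k.val
decreasing_by
  have h := s.2
  simp only [Finset.mem_filter, Finset.mem_univ, true_and, Fin.lt_def] at h
  omega

/-- `A` is the Cartan matrix of a complex semisimple Lie algebra of rank `r`,
i.e. a generalized Cartan matrix of finite type: diagonal entries `2`,
nonpositive off-diagonal entries, `A_{ab} = 0 ↔ A_{ba} = 0`, and `A` is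
symmetrizable by positive rationals `d_a` with `(d_a A_{ab})` symmetric
positive definite. -/
def IsCartanMatrix {r : ℕ} (A : Matrix (Fin r) (Fin r) ℤ) : Prop :=
  (∀ a, A a a = 2) ∧
  (∀ a b, a ≠ b → A a b ≤ 0) ∧
  (∀ a b, A a b = 0 ↔ A b a = 0) ∧
  (∃ d : Fin r → ℚ, (∀ a, 0 < d a) ∧
    (∀ a b, d a * (A a b : ℚ) = d b * (A b a : ℚ)) ∧
    (∀ x : Fin r → ℚ, x ≠ 0 → 0 < ∑ a, ∑ b, x a * d a * (A a b : ℚ) * x b))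

/-- `(w_0, …, w_s)` is a diagram walk followed by the condition that the final
root appears in `λ`: a `λ`-walk.  (Successive entries are distinct and adjacent
in the Dynkin diagram, and `λ_{w_s} > 0`.) -/
def IsLambdaWalkSeq {r : ℕ} (A : Matrix (Fin r) (Fin r) ℤ) (lam : Fin r → ℤ)
    {s : ℕ} (w : Fin (s + 1) → Fin r) : Prop :=
  (∀ t : Fin s, w t.castSucc ≠ w t.succ ∧ A (w t.castSucc) (w t.succ) < 0) ∧
  0 < lam (w (Fin.last s))

/-- `(w_0, w_1, …, w_s)` is a hesitant `λ`-walk: `s ≥ 1`, `w_0 = w_1`, the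
walking component `(w_1, …, w_s)` is a diagram walk, and `λ_{w_s} > 0`. -/
def IsHesitantLambdaWalkSeq {r : ℕ} (A : Matrix (Fin r) (Fin r) ℤ)
    (lam : Fin r → ℤ) {s : ℕ} (w : Fin (s + 1) → Fin r) : Prop :=
  1 ≤ s ∧ w 0 = w 1 ∧
  (∀ t : Fin s, 1 ≤ t.val →
    (w t.castSucc ≠ w t.succ ∧ A (w t.castSucc) (w t.succ) < 0)) ∧
  0 < lam (w (Fin.last s))

/-- The word `i = (i_1, …, i_n)` is hesitant-`λ`-walk-avoiding: no subword
(subsequence, given by a strictly increasing reindexing `j`) is a hesitant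
`λ`-walk. -/
def HesitantLambdaWalkAvoiding {r n : ℕ} (A : Matrix (Fin r) (Fin r) ℤ)
    (lam : Fin r → ℤ) (i : Fin n → Fin r) : Prop :=
  ¬ ∃ (s : ℕ) (j : Fin (s + 1) → Fin n), StrictMono j ∧
      IsHesitantLambdaWalkSeq A lam (i ∘ j)

/-- Minimality of a hesitant `λ`-walk `(w_0, …, w_s)`: the entries of the
walking component `w_1, …, w_s` are pairwise distinct, and if `s ≥ 2` then
`λ_{w_t} = 0` for `0 ≤ t ≤ s − 1`. -/
def MinimalHLW {r s : ℕ} (lam : Fin r → ℤ) (w : Fin (s + 1) → Fin r) : Prop :=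
  (∀ p q : Fin (s + 1), 1 ≤ p.val → 1 ≤ q.val → w p = w q → p = q) ∧
  (2 ≤ s → ∀ t : Fin (s + 1), t.val ≤ s - 1 → lam (w t) = 0)

noncomputable def GKX {n : ℕ} (c : Fin n → Fin n → ℤ) (ℓ : Fin n → ℤ)
    (i j : Fin n) (ε t : ℝ) (k : Fin n) : ℝ :=
  if k = j then (ℓ j : ℝ)
  else
    let A : ℝ := (ℓ k : ℝ) - ∑ s ∈ (Finset.univ.filter fun s : Fin n => k < s).attach,
      (c k s.1 : ℝ) * GKX c ℓ i j ε t s.1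
    if k = i then t * A
    else if 0 ≤ A then 0 else max (A / 2) (-ε)
termination_by n - k.val
decreasing_by
  have h := s.2
  simp only [Finset.mem_filter, Finset.mem_univ, true_and, Fin.lt_def] at h
  omega

lemma GKX_eq {n : ℕ} (c : Fin n → Fin n → ℤ) (ℓ : Fin n → ℤ)
    (i j : Fin n) (ε t : ℝ) (k : Fin n) :
    GKX c ℓ i j ε t k =
      if k = j then (ℓ j : ℝ)
      else if k = i then t * GKA c ℓ k (GKX c ℓ i j ε t)
      else if 0 ≤ GKA c ℓ k (GKX c ℓ i j ε t) then 0
      else max (GKA c ℓ k (GKX c ℓ i j ε t) / 2) (-ε) := by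
  rw [GKX, GKA]
  rw [Finset.sum_attach (Finset.univ.filter fun s : Fin n => k < s)
    (fun u => (c k u : ℝ) * GKX c ℓ i j ε t u)]

lemma GKA_congr {n : ℕ} (c : Fin n → Fin n → ℤ) (ℓ : Fin n → ℤ) (p : Fin n)
    {x y : Fin n → ℝ} (h : ∀ k, p < k → x k = y k) : GKA c ℓ p x = GKA c ℓ p y := by
  unfold GKA
  congr 1
  apply Finset.sum_congr rfl
  intro k hk
  simp only [Finset.mem_filter, Finset.mem_univ, true_and] at hk
  rw [h k hk]

lemma GKX_indep {n : ℕ} (c : Fin n → Fin n → ℤ) (ℓ : Fin n → ℤ) (i j : Fin n)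
    (ε t t' : ℝ) : ∀ s : Fin n, i < s → GKX c ℓ i j ε t s = GKX c ℓ i j ε t' s := by
  suffices h : ∀ m : ℕ, ∀ s : Fin n, n - s.val ≤ m → i < s →
      GKX c ℓ i j ε t s = GKX c ℓ i j ε t' s by
    intro s hs; exact h n s (by omega) hs
  intro m
  induction m with
  | zero => intro s h _; have := s.isLt; omega
  | succ m ih =>
    intro s hm hs
    have hA : GKA c ℓ s (GKX c ℓ i j ε t) = GKA c ℓ s (GKX c ℓ i j ε t') := by
      unfold GKA
      congr 1
      apply Finset.sum_congr rfl
      intro k hk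
      simp only [Finset.mem_filter, Finset.mem_univ, true_and] at hk
      have hk' : s.val < k.val := hk
      have hkn := k.isLt
      rw [ih k (by omega) (lt_trans hs hk)]
    rw [GKX_eq, GKX_eq, hA]
    have hsi : s ≠ i := ne_of_gt hs
    simp [hsi]

lemma GKX_gt_j {n : ℕ} (c : Fin n → Fin n → ℤ) (ℓ : Fin n → ℤ) (i j : Fin n)
    (ε t : ℝ) (hℓ : ∀ p, 0 ≤ ℓ p) (hij : i < j) :
    ∀ s : Fin n, j < s → GKX c ℓ i j ε t s = 0 := by
  suffices h : ∀ m : ℕ, ∀ s : Fin n, n - s.val ≤ m → j < s → GKX c ℓ i j ε t s = 0 by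
    intro s hs; exact h n s (by omega) hs
  intro m
  induction m with
  | zero => intro s h _; have := s.isLt; omega
  | succ m ih =>
    intro s hm hs
    have hA : GKA c ℓ s (GKX c ℓ i j ε t) = (ℓ s : ℝ) := by
      unfold GKA
      rw [Finset.sum_eq_zero, sub_zero]
      intro k hk
      simp only [Finset.mem_filter, Finset.mem_univ, true_and] at hk
      have hk' : s.val < k.val := hk
      have hkn := k.isLt
      rw [ih k (by omega) (lt_trans hs hk), mul_zero]
    have hsj : s ≠ j := ne_of_gt hs
    have hsi : s ≠ i := ne_of_gt (lt_trans hij hs)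
    rw [GKX_eq, if_neg hsj, if_neg hsi, hA, if_pos (by exact_mod_cast hℓ s)]

lemma GKX_j {n : ℕ} (c : Fin n → Fin n → ℤ) (ℓ : Fin n → ℤ) (i j : Fin n)
    (ε t : ℝ) : GKX c ℓ i j ε t j = (ℓ j : ℝ) := by
  rw [GKX_eq, if_pos rfl]

lemma GKX_bound {n : ℕ} (c : Fin n → Fin n → ℤ) (ℓ : Fin n → ℤ) (i j : Fin n)
    (ε t : ℝ) (hε : 0 < ε) (k : Fin n) (hki : k ≠ i) (hkj : k ≠ j) :
    -ε ≤ GKX c ℓ i j ε t k ∧ GKX c ℓ i j ε t k ≤ 0 := by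
  rw [GKX_eq, if_neg hkj, if_neg hki]
  split_ifs with h
  · constructor <;> linarith
  · push_neg at h
    constructor
    · exact le_max_right _ _
    · apply max_le <;> linarith

lemma GKA_i_neg {n : ℕ} (c : Fin n → Fin n → ℤ) (ℓ : Fin n → ℤ) (i j : Fin n)
    (ε t : ℝ) (hℓ : ∀ p, 0 ≤ ℓ p) (hij : i < j) (hc : 1 < c i j)
    (heq : ℓ i = ℓ j) (hpos : 0 < ℓ j) (hε : 0 < ε)
    (hεM : ε * (∑ k ∈ Finset.univ.filter (fun k : Fin n => i < k), |(c i k : ℝ)|) ≤ 1/2) :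
    GKA c ℓ i (GKX c ℓ i j ε t) ≤ -(1/2) := by
  set X := GKX c ℓ i j ε t with hX
  set F := Finset.univ.filter (fun k : Fin n => i < k) with hF
  have hjF : j ∈ F := by simp [hF, hij]
  have hsum : ∑ k ∈ F, (c i k : ℝ) * X k
      = (c i j : ℝ) * X j + ∑ k ∈ F.erase j, (c i k : ℝ) * X k :=
    (Finset.add_sum_erase F _ hjF).symm
  have hXj : X j = (ℓ j : ℝ) := GKX_j c ℓ i j ε t
  have hterm : ∀ k ∈ F.erase j, -(|(c i k : ℝ)| * ε) ≤ (c i k : ℝ) * X k := by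
    intro k hk
    have hkj : k ≠ j := (Finset.mem_erase.mp hk).1
    have hkF := (Finset.mem_erase.mp hk).2
    have hik : i < k := by simpa [hF] using hkF
    have hki : k ≠ i := ne_of_gt hik
    obtain ⟨hb1, hb2⟩ := GKX_bound c ℓ i j ε t hε k hki hkj
    rcases le_or_gt 0 ((c i k : ℝ)) with hp | hp
    · rw [abs_of_nonneg hp]; nlinarith
    · rw [abs_of_neg hp]; nlinarith
  have hsum2 : -(∑ k ∈ F.erase j, |(c i k : ℝ)| * ε) ≤ ∑ k ∈ F.erase j, (c i k : ℝ) * X k := by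
    rw [← Finset.sum_neg_distrib]
    exact Finset.sum_le_sum hterm
  have hsub : ∑ k ∈ F.erase j, |(c i k : ℝ)| * ε ≤ ε * ∑ k ∈ F, |(c i k : ℝ)| := by
    rw [← Finset.sum_mul, mul_comm]
    apply mul_le_mul_of_nonneg_left _ (le_of_lt hε)
    apply Finset.sum_le_sum_of_subset_of_nonneg (Finset.erase_subset _ _)
    intro _ _ _; exact abs_nonneg _
  have hcc : (2 : ℝ) ≤ (c i j : ℝ) := by exact_mod_cast hc
  have hlj : (1 : ℝ) ≤ (ℓ j : ℝ) := by exact_mod_cast hpos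
  have hli : (ℓ i : ℝ) = (ℓ j : ℝ) := by exact_mod_cast heq
  unfold GKA
  rw [hsum, hXj]
  nlinarith

lemma GKX_mem {n : ℕ} (c : Fin n → Fin n → ℤ) (ℓ : Fin n → ℤ) (i j : Fin n)
    (ε t : ℝ) (hℓ : ∀ p, 0 ≤ ℓ p) (hij : i < j) (hc : 1 < c i j)
    (heq : ℓ i = ℓ j) (hpos : 0 < ℓ j) (hε : 0 < ε)
    (hεM : ε * (∑ k ∈ Finset.univ.filter (fun k : Fin n => i < k), |(c i k : ℝ)|) ≤ 1/2)
    (ht : 0 < t) (ht1 : t < 1) :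
    GKX c ℓ i j ε t ∈ GKcube c ℓ := by
  intro k
  rcases eq_or_ne k j with h | hkj
  · rw [h]
    right
    have hXj : GKX c ℓ i j ε t j = (ℓ j : ℝ) := GKX_j c ℓ i j ε t
    have hA : GKA c ℓ j (GKX c ℓ i j ε t) = (ℓ j : ℝ) := by
      unfold GKA
      rw [Finset.sum_eq_zero, sub_zero]
      intro s hs
      simp only [Finset.mem_filter, Finset.mem_univ, true_and] at hs
      rw [GKX_gt_j c ℓ i j ε t hℓ hij s hs, mul_zero]
    rw [hXj, hA]
    exact ⟨by exact_mod_cast hℓ j, le_refl _⟩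
  · rcases eq_or_ne k i with h | hki
    · rw [h]
      left
      have hA := GKA_i_neg c ℓ i j ε t hℓ hij hc heq hpos hε hεM
      have hXi : GKX c ℓ i j ε t i = t * GKA c ℓ i (GKX c ℓ i j ε t) := by
        rw [GKX_eq, if_neg (ne_of_lt hij), if_pos rfl]
      rw [hXi]
      constructor <;> nlinarith
    · rw [GKX_eq, if_neg hkj, if_neg hki]
      split_ifs with h
      · right; exact ⟨le_refl 0, h⟩
      · left
        push_neg at h
        constructor
        · apply lt_max_of_lt_left; linarith
        · apply max_lt <;> linarith

theorem statement3' {n : ℕ} (c : Fin n → Fin n → ℤ) (ℓ : Fin n → ℤ)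
    (hℓ : ∀ p, 0 ≤ ℓ p) (i j : Fin n) (hij : i < j)
    (hc : 1 < c i j) (heq : ℓ i = ℓ j) (hpos : 0 < ℓ j)
    (hS' : ∃ S : Finset (Fin n → ℝ), GKcube c ℓ = convexHull ℝ (S : Set (Fin n → ℝ))) :
    False := by
  obtain ⟨S, hS⟩ := hS'
  have hcpt : IsCompact (GKcube c ℓ) := by
    rw [hS]; exact S.finite_toSet.isCompact_convexHull (𝕜 := ℝ)
  have hM0 : 0 ≤ ∑ k ∈ Finset.univ.filter (fun k : Fin n => i < k), |(c i k : ℝ)| :=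
    Finset.sum_nonneg fun _ _ => abs_nonneg _
  set M : ℝ := ∑ k ∈ Finset.univ.filter (fun k : Fin n => i < k), |(c i k : ℝ)| with hM
  set ε : ℝ := 1 / (2 * (M + 1)) with hε
  have hεpos : 0 < ε := by rw [hε]; positivity
  have hεM : ε * (∑ k ∈ Finset.univ.filter (fun k : Fin n => i < k), |(c i k : ℝ)|) ≤ 1/2 := by
    rw [← hM, hε]
    have h2 : (0:ℝ) < 2 * (M + 1) := by positivity
    rw [div_mul_eq_mul_div, div_le_iff₀ h2]
    nlinarith
  set u : ℕ → (Fin n → ℝ) := fun m => GKX c ℓ i j ε (1/(m+2 : ℝ)) with hu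
  have htm : ∀ m : ℕ, 0 < (1:ℝ)/(m+2) ∧ (1:ℝ)/(m+2) < 1 := by
    intro m
    have h2 : (0:ℝ) < (m:ℝ) + 2 := by positivity
    constructor
    · positivity
    · rw [div_lt_one h2]; nlinarith [Nat.cast_nonneg (α := ℝ) m]
  have hmem : ∀ m, u m ∈ GKcube c ℓ := fun m =>
    GKX_mem c ℓ i j ε _ hℓ hij hc heq hpos hεpos hεM (htm m).1 (htm m).2
  obtain ⟨y, hyC, φ, hφ, hlim⟩ := hcpt.tendsto_subseq hmem
  set A0 : ℝ := GKA c ℓ i (GKX c ℓ i j ε (1/2)) with hA0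
  have habove : ∀ m : ℕ, ∀ s : Fin n, i < s → u m s = GKX c ℓ i j ε (1/2) s :=
    fun m s hs => GKX_indep c ℓ i j ε _ _ s hs
  have hAm : ∀ m, GKA c ℓ i (u m) = A0 := fun m => GKA_congr c ℓ i (habove m)
  have hui : ∀ m : ℕ, u m i = (1/(m+2:ℝ)) * A0 := by
    intro m
    have h7 : u m i = (1/(m+2:ℝ)) * GKA c ℓ i (u m) := by
      show GKX c ℓ i j ε _ i = _
      rw [GKX_eq, if_neg (ne_of_lt hij), if_pos rfl]
    rw [h7, hAm m]
  have hys : ∀ s : Fin n, i < s → y s = GKX c ℓ i j ε (1/2) s := by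
    intro s hs
    have h1 : Filter.Tendsto (fun m => (u ∘ φ) m s) Filter.atTop (nhds (y s)) :=
      tendsto_pi_nhds.mp hlim s
    have h2 : (fun m => (u ∘ φ) m s) = fun _ => GKX c ℓ i j ε (1/2) s := by
      funext m; exact habove (φ m) s hs
    rw [h2] at h1
    exact tendsto_nhds_unique h1 tendsto_const_nhds
  have hyi : y i = 0 := by
    have h1 : Filter.Tendsto (fun m => (u ∘ φ) m i) Filter.atTop (nhds (y i)) :=
      tendsto_pi_nhds.mp hlim i
    have h3 : Filter.Tendsto (fun m : ℕ => (1/((m:ℝ)+2)) * A0) Filter.atTop (nhds 0) := by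
      have h4 : Filter.Tendsto (fun m : ℕ => ((m:ℝ)+2)) Filter.atTop Filter.atTop :=
        Filter.tendsto_atTop_add_const_right _ 2 tendsto_natCast_atTop_atTop
      have h5 := h4.inv_tendsto_atTop
      have h6 := h5.mul_const A0
      simpa [one_div] using h6
    have h6 : Filter.Tendsto (fun m => (u ∘ φ) m i) Filter.atTop (nhds 0) := by
      have h8 : (fun m => (u ∘ φ) m i) = (fun m : ℕ => (1/((m:ℝ)+2)) * A0) ∘ φ := by
        funext m; simp only [Function.comp_apply]; exact hui (φ m)
      rw [h8]
      exact h3.comp hφ.tendsto_atTop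
    exact tendsto_nhds_unique h1 h6
  have hAy : GKA c ℓ i y = A0 := GKA_congr c ℓ i (fun k hk => hys k hk)
  have hA0neg : A0 ≤ -(1/2) := GKA_i_neg c ℓ i j ε (1/2) hℓ hij hc heq hpos hεpos hεM
  rcases hyC i with ⟨h1, h2⟩ | ⟨h1, h2⟩
  · rw [hyi] at h2; exact lt_irrefl _ h2
  · rw [hyi, hAy] at h2; linarith

/-- If `ℓ_i ≥ 0` for all `i` and there are indices `i < j`
with `c_{ij} > 1` and `ℓ_i = ℓ_j > 0`, then `(C(c,ℓ), ρ)` is twisted. -/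
theorem statement3 {n : ℕ} (c : Fin n → Fin n → ℤ) (ℓ : Fin n → ℤ)
    (hℓ : ∀ p, 0 ≤ ℓ p) (i j : Fin n) (hij : i < j)
    (hc : 1 < c i j) (heq : ℓ i = ℓ j) (hpos : 0 < ℓ j) :
    ¬ GKUntwisted c ℓ := by
  intro hU
  exact statement3' c ℓ hℓ i j hij hc heq hpos hU.2.2.1
end

section
/- Let A be the Cartan matrix of a complex semisimple Lie algebra of rank r, let I = (i_1,…,i_n) be a word with entries in {1,…,r}, and let λ = (λ_1,…,λ_r) be a dominant weight. Let (C(c,ℓ), ρ) be the associated Grossberg–Karshon twisted cube (c_{jk} = A_{i_j i_k}, ℓ_j = λ_{i_j}). If (C(c,ℓ), ρ) is twisted, then there exists a subword (i_{j_0}, i_{j_1}, …, i_{j_s}) of I which is a hesitant λ-walk. Equivalently, if I is hesitant-λ-walk-avoiding then (C(c,ℓ), ρ) is untwisted. -/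
open Finset

/-! ### Auxiliary development -/

/-- The untwisted polytope: both constraints hold with the nonnegative branch. -/
def GKPset {n : ℕ} (c : Fin n → Fin n → ℤ) (ℓ : Fin n → ℤ) : Set (Fin n → ℝ) :=
  {x | ∀ j, 0 ≤ x j ∧ x j ≤ GKA c ℓ j x}

lemma GKA_combo {n : ℕ} (c : Fin n → Fin n → ℤ) (ℓ : Fin n → ℤ) (j : Fin n)
    {a b : ℝ} (hab : a + b = 1) (x y : Fin n → ℝ) :
    GKA c ℓ j (a • x + b • y) = a * GKA c ℓ j x + b * GKA c ℓ j y := by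
  simp only [GKA, Pi.add_apply, Pi.smul_apply, smul_eq_mul]
  have h : ∑ k ∈ Finset.univ.filter (fun k : Fin n => j < k), (c j k : ℝ) * (a * x k + b * y k)
      = a * ∑ k ∈ Finset.univ.filter (fun k : Fin n => j < k), (c j k : ℝ) * x k
        + b * ∑ k ∈ Finset.univ.filter (fun k : Fin n => j < k), (c j k : ℝ) * y k := by
    rw [Finset.mul_sum, Finset.mul_sum, ← Finset.sum_add_distrib]
    exact Finset.sum_congr rfl fun k _ => by ring
  rw [h]
  linear_combination (-(ℓ j : ℝ)) * hab

lemma GKPset_convex {n : ℕ} (c : Fin n → Fin n → ℤ) (ℓ : Fin n → ℤ) :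
    Convex ℝ (GKPset c ℓ) := by
  intro x hx y hy a b ha hb hab j
  have h1 := hx j
  have h2 := hy j
  have hval : (a • x + b • y) j = a * x j + b * y j := by
    simp [Pi.add_apply, Pi.smul_apply, smul_eq_mul]
  constructor
  · rw [hval]
    exact add_nonneg (mul_nonneg ha h1.1) (mul_nonneg hb h2.1)
  · rw [hval, GKA_combo c ℓ j hab]
    exact add_le_add (mul_le_mul_of_nonneg_left h1.2 ha) (mul_le_mul_of_nonneg_left h2.2 hb)

lemma GKA_continuous {n : ℕ} (c : Fin n → Fin n → ℤ) (ℓ : Fin n → ℤ) (j : Fin n) :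
    Continuous (GKA c ℓ j) := by
  unfold GKA
  exact continuous_const.sub
    (continuous_finset_sum _ fun k _ => continuous_const.mul (continuous_apply k))

lemma GKPset_closed {n : ℕ} (c : Fin n → Fin n → ℤ) (ℓ : Fin n → ℤ) :
    IsClosed (GKPset c ℓ) := by
  have h : GKPset c ℓ = ⋂ j, ({x : Fin n → ℝ | 0 ≤ x j} ∩ {x | x j ≤ GKA c ℓ j x}) := by
    ext x
    simp only [GKPset, Set.mem_setOf_eq, Set.mem_iInter, Set.mem_inter_iff]
  rw [h]
  exact isClosed_iInter fun j =>
    (isClosed_le continuous_const (continuous_apply j)).inter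
      (isClosed_le (continuous_apply j) (GKA_continuous c ℓ j))

lemma GKA_succ_cons {n : ℕ} (c : Fin (n + 1) → Fin (n + 1) → ℤ) (ℓ : Fin (n + 1) → ℤ)
    (t : ℝ) (x' : Fin n → ℝ) (j : Fin n) :
    GKA c ℓ j.succ (Fin.cons t x') =
      GKA (fun a b => c a.succ b.succ) (fun a => ℓ a.succ) j x' := by
  simp only [GKA]
  congr 1
  rw [Finset.sum_filter, Finset.sum_filter, Fin.sum_univ_succ]
  simp [Fin.cons_succ, Fin.succ_lt_succ_iff, Fin.not_lt_zero]

lemma GKA_zero_cons {n : ℕ} (c : Fin (n + 1) → Fin (n + 1) → ℤ) (ℓ : Fin (n + 1) → ℤ)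
    (t : ℝ) (x' : Fin n → ℝ) :
    GKA c ℓ 0 (Fin.cons t x') = (ℓ 0 : ℝ) - ∑ k : Fin n, (c 0 k.succ : ℝ) * x' k := by
  simp only [GKA]
  congr 1
  rw [Finset.sum_filter, Fin.sum_univ_succ]
  simp [Fin.cons_succ, Fin.succ_pos]


lemma GKPset_succ_iff {n : ℕ} (c : Fin (n + 1) → Fin (n + 1) → ℤ) (ℓ : Fin (n + 1) → ℤ)
    (y : Fin (n + 1) → ℝ) :
    y ∈ GKPset c ℓ ↔
      (Fin.tail y ∈ GKPset (fun a b => c a.succ b.succ) (fun a => ℓ a.succ) ∧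
        0 ≤ y 0 ∧ y 0 ≤ (ℓ 0 : ℝ) - ∑ k : Fin n, (c 0 k.succ : ℝ) * Fin.tail y k) := by
  have hy : Fin.cons (y 0) (Fin.tail y) = y := Fin.cons_self_tail y
  constructor
  · intro h
    refine ⟨fun j => ?_, (h 0).1, ?_⟩
    · have h2 := h j.succ
      rw [← hy, GKA_succ_cons] at h2
      simpa [Fin.cons_succ, Fin.tail] using h2
    · have h2 := (h 0).2
      rw [← hy, GKA_zero_cons] at h2
      simpa [Fin.cons_zero] using h2
  · rintro ⟨h1, h2, h3⟩ j
    rcases Fin.eq_zero_or_eq_succ j with rfl | ⟨j', rfl⟩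
    · refine ⟨h2, ?_⟩
      rw [← hy, GKA_zero_cons]
      simpa [Fin.cons_zero] using h3
    · have h4 := h1 j'
      refine ⟨h4.1, ?_⟩
      rw [← hy, GKA_succ_cons]
      simpa [Fin.cons_succ, Fin.tail] using h4.2

lemma GKPset_hull : ∀ (n : ℕ) (c : Fin n → Fin n → ℤ) (ℓ : Fin n → ℤ),
    (∀ (x : Fin n → ℝ) (q : Fin n),
        (∀ m, q < m → 0 ≤ x m ∧ x m ≤ GKA c ℓ m x) → 0 ≤ GKA c ℓ q x) →
    ∃ S : Finset (Fin n → ℝ), GKPset c ℓ = convexHull ℝ (S : Set (Fin n → ℝ)) := by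
  intro n
  induction n with
  | zero =>
    intro c ℓ _
    refine ⟨{0}, ?_⟩
    rw [Finset.coe_singleton, convexHull_singleton]
    ext x
    constructor
    · intro _
      exact funext fun j => j.elim0
    · intro _ j
      exact j.elim0
  | succ n IH =>
    intro c ℓ Hpos
    have Hpos' : ∀ (x' : Fin n → ℝ) (q : Fin n),
        (∀ m, q < m → 0 ≤ x' m ∧
          x' m ≤ GKA (fun a b => c a.succ b.succ) (fun a => ℓ a.succ) m x') →
        0 ≤ GKA (fun a b => c a.succ b.succ) (fun a => ℓ a.succ) q x' := by
      intro x' q hyp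
      rw [← GKA_succ_cons c ℓ 0 x' q]
      refine Hpos (Fin.cons 0 x') q.succ fun m hm => ?_
      have hm0 : m ≠ 0 := by
        rintro rfl
        exact Fin.not_lt_zero _ hm
      obtain ⟨m', rfl⟩ := Fin.eq_succ_of_ne_zero hm0
      rw [Fin.cons_succ, GKA_succ_cons]
      exact hyp m' (Fin.succ_lt_succ_iff.mp hm)
    obtain ⟨S', hS'⟩ := IH _ _ Hpos'
    set gval : (Fin n → ℝ) → ℝ :=
      fun x' => (ℓ 0 : ℝ) - ∑ k : Fin n, (c 0 k.succ : ℝ) * x' k with hgval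
    have hg0 : ∀ x' ∈ GKPset (fun a b => c a.succ b.succ) (fun a => ℓ a.succ),
        0 ≤ gval x' := by
      intro x' hx'
      rw [show gval x' = GKA c ℓ 0 (Fin.cons 0 x') from (GKA_zero_cons c ℓ 0 x').symm]
      refine Hpos (Fin.cons 0 x') 0 fun m hm => ?_
      obtain ⟨m', rfl⟩ := Fin.eq_succ_of_ne_zero (Fin.pos_iff_ne_zero.mp hm)
      rw [Fin.cons_succ, GKA_succ_cons]
      exact hx' m'
    refine ⟨S'.image (fun s => Fin.cons (0 : ℝ) s) ∪
      S'.image (fun s => Fin.cons (gval s) s), ?_⟩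
    apply Set.Subset.antisymm
    · intro y hy
      obtain ⟨htail, h0, h1⟩ := (GKPset_succ_iff c ℓ y).mp hy
      rw [hS', Finset.convexHull_eq] at htail
      obtain ⟨w, hw0, hw1, hwc⟩ := htail
      have htl : Fin.tail y = ∑ s ∈ S', w s • s := by
        rw [← hwc, Finset.centerMass_eq_of_sum_1 _ _ hw1]
        simp
      have h1' : y 0 ≤ gval (Fin.tail y) := h1
      have hp0m : S'.centerMass w (fun s => Fin.cons (0 : ℝ) s) ∈
          convexHull ℝ ((S'.image (fun s => Fin.cons (0 : ℝ) s) ∪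
            S'.image (fun s => Fin.cons (gval s) s) : Finset (Fin (n+1) → ℝ)) :
              Set (Fin (n+1) → ℝ)) := by
        refine Finset.centerMass_mem_convexHull _ hw0 (by rw [hw1]; norm_num) fun s hs => ?_
        exact Finset.mem_coe.mpr
          (Finset.mem_union_left _ (Finset.mem_image_of_mem _ hs))
      have hp1m : S'.centerMass w (fun s => Fin.cons (gval s) s) ∈
          convexHull ℝ ((S'.image (fun s => Fin.cons (0 : ℝ) s) ∪
            S'.image (fun s => Fin.cons (gval s) s) : Finset (Fin (n+1) → ℝ)) :
              Set (Fin (n+1) → ℝ)) := by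
        refine Finset.centerMass_mem_convexHull _ hw0 (by rw [hw1]; norm_num) fun s hs => ?_
        exact Finset.mem_coe.mpr
          (Finset.mem_union_right _ (Finset.mem_image_of_mem _ hs))
      have hp0 : S'.centerMass w (fun s => Fin.cons (0 : ℝ) s)
          = Fin.cons 0 (Fin.tail y) := by
        rw [Finset.centerMass_eq_of_sum_1 _ _ hw1, htl]
        funext j
        rcases Fin.eq_zero_or_eq_succ j with rfl | ⟨j', rfl⟩
        · simp [Finset.sum_apply, Fin.cons_zero]
        · simp [Finset.sum_apply, Fin.cons_succ]
      have gcombo : gval (∑ s ∈ S', w s • s) = ∑ s ∈ S', w s * gval s := by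
        have key : ∑ k : Fin n, (c 0 k.succ : ℝ) * (∑ s ∈ S', w s * s k)
            = ∑ s ∈ S', w s * ∑ k : Fin n, (c 0 k.succ : ℝ) * s k := by
          simp only [Finset.mul_sum]
          rw [Finset.sum_comm]
          exact Finset.sum_congr rfl fun s _ => Finset.sum_congr rfl fun k _ => by ring
        simp only [hgval, Finset.sum_apply, Pi.smul_apply, smul_eq_mul]
        rw [key]
        simp only [mul_sub, Finset.sum_sub_distrib, ← Finset.sum_mul, hw1, one_mul]
      have hp1 : S'.centerMass w (fun s => Fin.cons (gval s) s)
          = Fin.cons (gval (Fin.tail y)) (Fin.tail y) := by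
        rw [Finset.centerMass_eq_of_sum_1 _ _ hw1, htl]
        funext j
        rcases Fin.eq_zero_or_eq_succ j with rfl | ⟨j', rfl⟩
        · simp only [Finset.sum_apply, Pi.smul_apply, smul_eq_mul, Fin.cons_zero, gcombo]
        · simp [Finset.sum_apply, Fin.cons_succ]
      by_cases hzero : gval (Fin.tail y) = 0
      · have hy0 : y 0 = 0 := le_antisymm (hzero ▸ h1') h0
        have hyeq : y = S'.centerMass w (fun s => Fin.cons (0 : ℝ) s) := by
          rw [hp0, ← hy0, Fin.cons_self_tail]
        rw [hyeq]
        exact hp0m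
      · have hgnn : 0 ≤ gval (Fin.tail y) := le_trans h0 h1'
        have hgpos : 0 < gval (Fin.tail y) := lt_of_le_of_ne hgnn (Ne.symm hzero)
        set t : ℝ := y 0 / gval (Fin.tail y) with hts
        have ht0 : 0 ≤ t := div_nonneg h0 hgnn
        have ht1 : t ≤ 1 := (div_le_one hgpos).mpr h1'
        have hcomb : y = (1 - t) • Fin.cons 0 (Fin.tail y)
            + t • Fin.cons (gval (Fin.tail y)) (Fin.tail y) := by
          funext j
          rcases Fin.eq_zero_or_eq_succ j with rfl | ⟨j', rfl⟩
          · simp only [Pi.add_apply, Pi.smul_apply, Fin.cons_zero, smul_eq_mul,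
              mul_zero, zero_add, hts]
            rw [div_mul_cancel₀ _ hzero]
          · simp only [Pi.add_apply, Pi.smul_apply, Fin.cons_succ, smul_eq_mul]
            show y j'.succ = (1 - t) * Fin.tail y j' + t * Fin.tail y j'
            simp only [Fin.tail]
            ring
        rw [hcomb]
        have := (convex_convexHull ℝ _) (hp0 ▸ hp0m) (hp1 ▸ hp1m)
          (by linarith : (0:ℝ) ≤ 1 - t) ht0 (by ring : (1 - t) + t = 1)
        exact this
    · refine convexHull_min ?_ (GKPset_convex c ℓ)
      intro z hz
      rcases Finset.mem_union.mp (Finset.mem_coe.mp hz) with h | h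
      · obtain ⟨s, hs, rfl⟩ := Finset.mem_image.mp h
        have hsP : s ∈ GKPset (fun a b => c a.succ b.succ) (fun a => ℓ a.succ) := by
          rw [hS']
          exact subset_convexHull ℝ _ (Finset.mem_coe.mpr hs)
        rw [GKPset_succ_iff]
        refine ⟨by rwa [Fin.tail_cons], by rw [Fin.cons_zero], ?_⟩
        rw [Fin.cons_zero, Fin.tail_cons]
        exact hg0 s hsP
      · obtain ⟨s, hs, rfl⟩ := Finset.mem_image.mp h
        have hsP : s ∈ GKPset (fun a b => c a.succ b.succ) (fun a => ℓ a.succ) := by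
          rw [hS']
          exact subset_convexHull ℝ _ (Finset.mem_coe.mpr hs)
        rw [GKPset_succ_iff]
        refine ⟨by rwa [Fin.tail_cons], ?_, ?_⟩
        · rw [Fin.cons_zero]
          exact hg0 s hsP
        · rw [Fin.cons_zero, Fin.tail_cons]


lemma GK_rev_ind {n : ℕ} {P : Fin n → Prop}
    (h : ∀ q : Fin n, (∀ m, q < m → P m) → P q) : ∀ q, P q := by
  have H : ∀ t : ℕ, ∀ q : Fin n, n - q.val ≤ t → P q := by
    intro t
    induction t with
    | zero =>
      intro q hq
      have := q.isLt
      omega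
    | succ t ih =>
      intro q hq
      refine h q fun m hm => ih m ?_
      have h1 := q.isLt
      have h2 := m.isLt
      have h3 : q.val < m.val := hm
      omega
  exact fun q => H (n - q.val) q le_rfl

lemma GK_cons_strictMono {n s : ℕ} {p : Fin n} {w : Fin (s + 1) → Fin n}
    (h0 : p < w 0) (hw : StrictMono w) :
    StrictMono (Fin.cons p w : Fin (s + 2) → Fin n) := by
  intro a b hab
  rcases Fin.eq_zero_or_eq_succ b with rfl | ⟨b', rfl⟩
  · exact absurd hab (Fin.not_lt_zero a)
  rcases Fin.eq_zero_or_eq_succ a with rfl | ⟨a', rfl⟩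
  · simp only [Fin.cons_zero, Fin.cons_succ]
    exact lt_of_lt_of_le h0 (hw.monotone (Fin.zero_le b'))
  · simp only [Fin.cons_succ]
    exact hw (Fin.succ_lt_succ_iff.mp hab)

/-- Position `q` is dead: no `λ`-walk subword starts at `q`. -/
def GKDeadAt {r n : ℕ} (A : Matrix (Fin r) (Fin r) ℤ) (lam : Fin r → ℤ)
    (i : Fin n → Fin r) (q : Fin n) : Prop :=
  ¬ ∃ (s : ℕ) (w : Fin (s + 1) → Fin n), StrictMono w ∧ w 0 = q ∧
      IsLambdaWalkSeq A lam (i ∘ w)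

lemma GKdeadAt_lam {r n : ℕ} {A : Matrix (Fin r) (Fin r) ℤ} {lam : Fin r → ℤ}
    {i : Fin n → Fin r} (hlam : ∀ a, 0 ≤ lam a) {q : Fin n}
    (h : GKDeadAt A lam i q) : lam (i q) = 0 := by
  by_contra hne
  have hpos : 0 < lam (i q) := lt_of_le_of_ne (hlam _) (Ne.symm hne)
  refine h ⟨0, fun _ => q, ?_, rfl, ?_⟩
  · intro a b hab
    have h1 := a.isLt
    have h2 := b.isLt
    have h3 : a.val < b.val := hab
    omega
  · exact ⟨fun t => t.elim0, hpos⟩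

lemma GKdeadAt_of_eq {r n : ℕ} {A : Matrix (Fin r) (Fin r) ℤ} {lam : Fin r → ℤ}
    {i : Fin n → Fin r} {q m : Fin n} (hqm : q < m) (heq : i q = i m)
    (hd : GKDeadAt A lam i q) : GKDeadAt A lam i m := by
  rintro ⟨s, w, hmono, hw0, hwalk⟩
  refine hd ⟨s, fun t => if t = 0 then q else w t, ?_, if_pos rfl, ?_⟩
  · intro a b hab
    by_cases hb : b = 0
    · subst hb
      exact absurd hab (Fin.not_lt_zero a)
    · simp only [if_neg hb]
      by_cases ha : a = 0
      · subst ha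
        simp only [if_pos rfl]
        calc q < m := hqm
        _ = w 0 := hw0.symm
        _ ≤ w b := hmono.monotone (Fin.zero_le b)
      · simp only [if_neg ha]
        exact hmono hab
  · have hcomp : (i ∘ fun t => if t = 0 then q else w t) = i ∘ w := by
      funext t
      by_cases ht : t = 0
      · subst ht
        simp [hw0, heq]
      · simp [ht]
    rw [hcomp]
    exact hwalk

lemma GKdeadAt_of_adj {r n : ℕ} {A : Matrix (Fin r) (Fin r) ℤ} {lam : Fin r → ℤ}
    {i : Fin n → Fin r} (hAdiag : ∀ a, A a a = 2) {q m : Fin n} (hqm : q < m)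
    (hadj : A (i q) (i m) < 0) (hd : GKDeadAt A lam i q) : GKDeadAt A lam i m := by
  rintro ⟨s, w, hmono, hw0, hwalk⟩
  have hne : i q ≠ i m := by
    intro h
    rw [h, hAdiag] at hadj
    omega
  refine hd ⟨s + 1, Fin.cons q w, GK_cons_strictMono (hw0 ▸ hqm) hmono, Fin.cons_zero _ _, ?_⟩
  constructor
  · intro t
    rcases Fin.eq_zero_or_eq_succ t with rfl | ⟨t', rfl⟩
    · have e1 : (Fin.cons q w : Fin (s+2) → Fin n) ((0 : Fin (s+1)).castSucc) = q := by
        simp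
      have e2 : (Fin.cons q w : Fin (s+2) → Fin n) ((0 : Fin (s+1)).succ) = w 0 := by
        rw [Fin.cons_succ]
      simp only [Function.comp_apply, e1, e2, hw0]
      exact ⟨hne, hadj⟩
    · have e1 : (Fin.cons q w : Fin (s+2) → Fin n) (t'.succ.castSucc) = w t'.castSucc := by
        rw [← Fin.succ_castSucc, Fin.cons_succ]
      have e2 : (Fin.cons q w : Fin (s+2) → Fin n) (t'.succ.succ) = w t'.succ := by
        rw [Fin.cons_succ]
      simp only [Function.comp_apply, e1, e2]
      exact hwalk.1 t'
  · have e3 : (Fin.cons q w : Fin (s+2) → Fin n) (Fin.last (s+1)) = w (Fin.last s) := by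
      rw [← Fin.succ_last, Fin.cons_succ]
    simp only [Function.comp_apply, e3]
    exact hwalk.2

lemma GKdeadAt_of_avoid {r n : ℕ} {A : Matrix (Fin r) (Fin r) ℤ} {lam : Fin r → ℤ}
    {i : Fin n → Fin r}
    (hav : ¬ ∃ (s : ℕ) (j : Fin (s + 1) → Fin n), StrictMono j ∧
      IsHesitantLambdaWalkSeq A lam (i ∘ j))
    {p q : Fin n} (hpq : p < q) (heq : i p = i q) : GKDeadAt A lam i q := by
  rintro ⟨s, w, hmono, hw0, hwalk⟩
  refine hav ⟨s + 1, Fin.cons p w, GK_cons_strictMono (hw0 ▸ hpq) hmono, ?_, ?_, ?_, ?_⟩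
  · omega
  · show i ((Fin.cons p w : Fin (s+2) → Fin n) 0) = i ((Fin.cons p w : Fin (s+2) → Fin n) 1)
    rw [Fin.cons_zero, ← Fin.succ_zero_eq_one, Fin.cons_succ, hw0]
    exact heq
  · intro t ht
    have ht0 : t ≠ 0 := by
      intro h
      subst h
      simp at ht
    obtain ⟨t', rfl⟩ := Fin.eq_succ_of_ne_zero ht0
    have e1 : (Fin.cons p w : Fin (s+2) → Fin n) (t'.succ.castSucc) = w t'.castSucc := by
      rw [← Fin.succ_castSucc, Fin.cons_succ]
    have e2 : (Fin.cons p w : Fin (s+2) → Fin n) (t'.succ.succ) = w t'.succ := by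
      rw [Fin.cons_succ]
    simp only [Function.comp_apply, e1, e2]
    exact hwalk.1 t'
  · have e3 : (Fin.cons p w : Fin (s+2) → Fin n) (Fin.last (s+1)) = w (Fin.last s) := by
      rw [← Fin.succ_last, Fin.cons_succ]
    simp only [Function.comp_apply, e3]
    exact hwalk.2

/-- "only if" direction.  With `A` a Cartan matrix, `i` a
word, `λ` dominant, `c_{jk} = A_{i_j i_k}`, `ℓ_j = λ_{i_j}`: if the
Grossberg–Karshon twisted cube is twisted, then some subword of `i` is a
hesitant `λ`-walk. -/
theorem statement6 {r n : ℕ} (A : Matrix (Fin r) (Fin r) ℤ)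
    (hA : IsCartanMatrix A) (lam : Fin r → ℤ) (hlam : ∀ a, 0 ≤ lam a)
    (i : Fin n → Fin r)
    (htw : ¬ GKUntwisted (fun j k => A (i j) (i k)) (fun j => lam (i j))) :
    ∃ (s : ℕ) (j : Fin (s + 1) → Fin n), StrictMono j ∧
      IsHesitantLambdaWalkSeq A lam (i ∘ j) := by
  by_contra hcon
  apply htw
  set c : Fin n → Fin n → ℤ := fun j k => A (i j) (i k) with hc
  set ℓ : Fin n → ℤ := fun j => lam (i j) with hℓ
  have CORE : ∀ x : Fin n → ℝ, ∀ q : Fin n,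
      (∀ m, q ≤ m → 0 ≤ x m ∧ x m ≤ GKA c ℓ m x) → GKDeadAt A lam i q → x q = 0 := by
    intro x
    refine GK_rev_ind (fun q IH hyp hdead => ?_)
    have hsum : ∑ k ∈ Finset.univ.filter (fun k : Fin n => q < k), (c q k : ℝ) * x k = 0 := by
      refine Finset.sum_eq_zero fun m hm => ?_
      have hqm : q < m := (Finset.mem_filter.mp hm).2
      by_cases hcz : c q m = 0
      · rw [hcz]
        simp
      · have hdm : GKDeadAt A lam i m := by
          by_cases hiq : i q = i m
          · exact GKdeadAt_of_eq hqm hiq hdead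
          · have hne : A (i q) (i m) ≠ 0 := fun h => hcz (by simpa [hc] using h)
            have hlt : A (i q) (i m) < 0 := lt_of_le_of_ne (hA.2.1 _ _ hiq) hne
            exact GKdeadAt_of_adj hA.1 hqm hlt hdead
        have hxm : x m = 0 := IH m hqm (fun m' hm' => hyp m' (le_trans hqm.le hm')) hdm
        rw [hxm, mul_zero]
    have hAq : GKA c ℓ q x = 0 := by
      simp only [GKA]
      rw [hsum, sub_zero]
      have := GKdeadAt_lam hlam hdead
      simp [hℓ, this]
    have h1 := hyp q le_rfl
    linarith [h1.1, h1.2, hAq]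
  have POS : ∀ (x : Fin n → ℝ) (q : Fin n),
      (∀ m, q < m → 0 ≤ x m ∧ x m ≤ GKA c ℓ m x) → 0 ≤ GKA c ℓ q x := by
    intro x q hyp
    have hsum : ∑ k ∈ Finset.univ.filter (fun k : Fin n => q < k), (c q k : ℝ) * x k ≤ 0 := by
      refine Finset.sum_nonpos fun m hm => ?_
      have hqm : q < m := (Finset.mem_filter.mp hm).2
      by_cases hiq : i q = i m
      · have hdm : GKDeadAt A lam i m := GKdeadAt_of_avoid hcon hqm hiq
        have hxm : x m = 0 := CORE x m (fun m' hm' => hyp m' (lt_of_lt_of_le hqm hm')) hdm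
        rw [hxm, mul_zero]
      · have hcle : (c q m : ℝ) ≤ 0 := by
          have h2 := hA.2.1 (i q) (i m) hiq
          simp only [hc]
          exact_mod_cast h2
        exact mul_nonpos_iff.mpr (Or.inr ⟨hcle, (hyp m hqm).1⟩)
    have hl : (0:ℝ) ≤ (ℓ q : ℝ) := by
      simp only [hℓ]
      exact_mod_cast hlam (i q)
    simp only [GKA]
    linarith
  have cubeP : GKcube c ℓ = GKPset c ℓ := by
    apply Set.Subset.antisymm
    · intro x hx
      have hall : ∀ q : Fin n, 0 ≤ x q ∧ x q ≤ GKA c ℓ q x := by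
        refine GK_rev_ind fun q IH => ?_
        rcases hx q with h | h
        · exfalso
          have := POS x q IH
          linarith [h.1, h.2]
        · exact h
      exact hall
    · intro x hx q
      exact Or.inr (hx q)
  obtain ⟨S, hS⟩ := GKPset_hull n c ℓ POS
  unfold GKUntwisted
  refine ⟨?_, ?_, ⟨S, ?_⟩, ?_⟩
  · rw [cubeP]
    exact GKPset_closed c ℓ
  · rw [cubeP]
    exact GKPset_convex c ℓ
  · rw [cubeP]
    exact hS
  · intro x hx
    have hxP : x ∈ GKPset c ℓ := cubeP ▸ hx
    simp only [GKrho]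
    rw [if_pos hx]
    have hsgn : ∀ k ∈ Finset.univ, GKsgn (x k) = -1 := fun k _ => by
      simp only [GKsgn]
      rw [if_neg (not_lt.mpr (hxP k).1)]
    rw [Finset.prod_congr rfl hsgn, Finset.prod_const, Finset.card_univ, Fintype.card_fin,
      ← mul_pow]
    norm_num
end
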